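/- Let α, β be commuting closed subspaces of a complex Hilbert space and x a ray not orthogonal to α or to α^⊥. Then p(x,β) = p(x,α)·p(α(x),β) + p(x,α^⊥)·p(α^⊥(x),β). -/

import Mathlib

local notation "⟪" x ", " y "⟫" => @inner ℂ _ _ x y

theorem p_total_probability_commuting {H : Type*} [NormedAddCommGroup H]
    [InnerProductSpace ℂ H] [CompleteSpace H]
    (α β : Submodule ℂ H)
    (hαc : IsClosed (α : Set H)) (hβc : IsClosed (β : Set H))
    [CompleteSpace α] [CompleteSpace β]
    (hcomm : ∀ w : H,
      (Submodule.orthogonalProjectionOnto α ((Submodule.orthogonalProjectionOnto β w : H)) : H) =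
      (Submodule.orthogonalProjectionOnto β ((Submodule.orthogonalProjectionOnto α w : H)) : H))
    (x : Submodule ℂ H) (u : H) (hu : u ≠ 0) (hx : x = Submodule.span ℂ {u})
    (hno : ¬ ∀ a ∈ x, ∀ b ∈ α, ⟪a, b⟫ = 0)
    (hno' : ¬ ∀ a ∈ x, ∀ b ∈ αᗮ, ⟪a, b⟫ = 0) :
    ‖(Submodule.orthogonalProjectionOnto β u : H)‖ ^ 2 / ‖u‖ ^ 2 =
      (‖(Submodule.orthogonalProjectionOnto α u : H)‖ ^ 2 / ‖u‖ ^ 2) *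
        (‖(Submodule.orthogonalProjectionOnto β ((Submodule.orthogonalProjectionOnto α u : H)) : H)‖ ^ 2 /
          ‖(Submodule.orthogonalProjectionOnto α u : H)‖ ^ 2) +
      (‖(Submodule.orthogonalProjectionOnto αᗮ u : H)‖ ^ 2 / ‖u‖ ^ 2) *
        (‖(Submodule.orthogonalProjectionOnto β ((Submodule.orthogonalProjectionOnto αᗮ u : H)) : H)‖ ^ 2 /
          ‖(Submodule.orthogonalProjectionOnto αᗮ u : H)‖ ^ 2) := by
  have hPa : (Submodule.orthogonalProjectionOnto α u : H) ≠ 0 := by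
    intro h
    have hmem : u ∈ αᗮ := by
      rw [← Submodule.orthogonalProjectionOnto_eq_zero_iff (K := α)]
      exact Subtype.coe_injective h
    apply hno
    intro a ha b hb
    rw [hx, Submodule.mem_span_singleton] at ha
    obtain ⟨c, rfl⟩ := ha
    rw [inner_smul_left, Submodule.mem_orthogonal' α u |>.mp hmem b hb, mul_zero]
  have hPa' : (Submodule.orthogonalProjectionOnto αᗮ u : H) ≠ 0 := by
    intro h
    have hmem : u ∈ αᗮᗮ := by
      rw [← Submodule.orthogonalProjectionOnto_eq_zero_iff (K := αᗮ)]
      exact Subtype.coe_injective h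
    apply hno'
    intro a ha b hb
    rw [hx, Submodule.mem_span_singleton] at ha
    obtain ⟨c, rfl⟩ := ha
    rw [inner_smul_left, Submodule.mem_orthogonal' αᗮ u |>.mp hmem b hb, mul_zero]
  have hPbAlpha : (Submodule.orthogonalProjectionOnto β ((Submodule.orthogonalProjectionOnto α u : H)) : H) ∈ α := by
    rw [← hcomm u]; exact Submodule.coe_mem _
  have hdiff : (Submodule.orthogonalProjectionOnto αᗮ u : H) = u - (Submodule.orthogonalProjectionOnto α u : H) := by
    have := Submodule.starProjection_add_starProjection_orthogonal (K := α) u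
    simp only [Submodule.starProjection_apply] at this
    linear_combination (norm := module) this
  have hPbAlpha' : (Submodule.orthogonalProjectionOnto β ((Submodule.orthogonalProjectionOnto αᗮ u : H)) : H) ∈ αᗮ := by
    rw [hdiff, map_sub, Submodule.coe_sub, ← hcomm u]
    exact Submodule.sub_starProjection_mem_orthogonal _
  have horth : ⟪(Submodule.orthogonalProjectionOnto β ((Submodule.orthogonalProjectionOnto α u : H)) : H),
      (Submodule.orthogonalProjectionOnto β ((Submodule.orthogonalProjectionOnto αᗮ u : H)) : H)⟫ = 0 :=
    (Submodule.mem_orthogonal α _).mp hPbAlpha' _ hPbAlpha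
  have hsplit : (Submodule.orthogonalProjectionOnto β u : H) =
      (Submodule.orthogonalProjectionOnto β ((Submodule.orthogonalProjectionOnto α u : H)) : H) +
      (Submodule.orthogonalProjectionOnto β ((Submodule.orthogonalProjectionOnto αᗮ u : H)) : H) := by
    conv_lhs => rw [← Submodule.starProjection_add_starProjection_orthogonal (K := α) u]
    rw [map_add, Submodule.coe_add, Submodule.starProjection_apply, Submodule.starProjection_apply]
  have hpyth := norm_add_sq_eq_norm_sq_add_norm_sq_of_inner_eq_zero _ _ horth
  have hpyth2 : ‖(Submodule.orthogonalProjectionOnto β ((Submodule.orthogonalProjectionOnto α u : H)) : H) +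
      (Submodule.orthogonalProjectionOnto β ((Submodule.orthogonalProjectionOnto αᗮ u : H)) : H)‖ ^ 2 =
      ‖(Submodule.orthogonalProjectionOnto β ((Submodule.orthogonalProjectionOnto α u : H)) : H)‖ ^ 2 +
      ‖(Submodule.orthogonalProjectionOnto β ((Submodule.orthogonalProjectionOnto αᗮ u : H)) : H)‖ ^ 2 := by
    rw [sq, sq, sq]; exact hpyth
  rw [hsplit, hpyth2]
  have h1 : ‖(Submodule.orthogonalProjectionOnto α u : H)‖ ^ 2 ≠ 0 :=
    pow_ne_zero 2 (norm_ne_zero_iff.mpr hPa)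
  have h2 : ‖(Submodule.orthogonalProjectionOnto αᗮ u : H)‖ ^ 2 ≠ 0 :=
    pow_ne_zero 2 (norm_ne_zero_iff.mpr hPa')
  have h3 : ‖u‖ ^ 2 ≠ 0 := pow_ne_zero 2 (norm_ne_zero_iff.mpr hu)
  generalize ‖(Submodule.orthogonalProjectionOnto β ((Submodule.orthogonalProjectionOnto α u : H)) : H)‖ ^ 2 = A
  generalize ‖(Submodule.orthogonalProjectionOnto β ((Submodule.orthogonalProjectionOnto αᗮ u : H)) : H)‖ ^ 2 = B
  generalize ‖(Submodule.orthogonalProjectionOnto α u : H)‖ ^ 2 = C at h1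
  generalize ‖(Submodule.orthogonalProjectionOnto αᗮ u : H)‖ ^ 2 = D at h2
  generalize ‖u‖ ^ 2 = n at h3
  field_simp
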